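/- The closure operation cl(X) = {y ∈ A : d(X ∪ {y}) = d(X)} defined from the predimension makes (A, cl) a pregeometry (matroid): cl is a closure operator satisfying the exchange property, and its rank function agrees with d. -/

import Mathlib

open Finset

/-- Predimension of `X`: `|X| - |{r ∈ R : r ⊆ X}|`. -/
def delta {α : Type*} [DecidableEq α] (R : Finset (Finset α)) (X : Finset α) : ℤ :=
  (X.card : ℤ) - ((R.filter (fun r => r ⊆ X)).card : ℤ)

/-- Closure defined from the dimension function: `cl(X) = {y ∈ A : d(X ∪ {y}) = d(X)}`. -/
def clFn {α : Type*} [DecidableEq α] (A : Finset α) (d : Finset α → ℤ) (X : Finset α) :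
    Finset α :=
  A.filter (fun y => d (insert y X) = d X)

/-- `(A, cl)` is a pregeometry: `cl` is a monotone, idempotent closure operator with
the exchange property, and the rank function of the resulting matroid is `d`. -/
theorem clFn_pregeometry {α : Type*} [DecidableEq α]
    (A : Finset α) (R : Finset (Finset α))
    (hR : ∀ r ∈ R, r.Nonempty ∧ r ⊆ A)
    (hpos : ∀ X ⊆ A, 0 ≤ delta R X)
    (d : Finset α → ℤ)
    (hd : ∀ X ⊆ A, IsLeast {z : ℤ | ∃ Y : Finset α, X ⊆ Y ∧ Y ⊆ A ∧ z = delta R Y} (d X)) :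
    (∀ X ⊆ A, X ⊆ clFn A d X) ∧
    (∀ X Y : Finset α, X ⊆ Y → Y ⊆ A → clFn A d X ⊆ clFn A d Y) ∧
    (∀ X ⊆ A, clFn A d (clFn A d X) = clFn A d X) ∧
    (∀ X ⊆ A, ∀ y ∈ A, ∀ z ∈ A,
      y ∈ clFn A d (insert z X) → y ∉ clFn A d X → z ∈ clFn A d (insert y X)) ∧
    (∀ X ⊆ A, ∃ B ⊆ X, (∀ b ∈ B, b ∉ clFn A d (B.erase b)) ∧
      X ⊆ clFn A d B ∧ (B.card : ℤ) = d X) := by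
  classical
  -- basic facts about delta
  have filt_mono : ∀ X Y : Finset α, X ⊆ Y →
      (R.filter (fun r => r ⊆ X)).card ≤ (R.filter (fun r => r ⊆ Y)).card := by
    intro X Y h
    apply card_le_card
    intro r hr
    simp only [mem_filter] at hr ⊢
    exact ⟨hr.1, hr.2.trans h⟩
  have delta_le : ∀ X : Finset α, delta R X ≤ (X.card : ℤ) := by
    intro X
    unfold delta
    have : (0:ℤ) ≤ ((R.filter (fun r => r ⊆ X)).card : ℤ) := Int.ofNat_nonneg _
    linarith
  have delta_insert : ∀ (y : α) (X : Finset α), delta R (insert y X) ≤ delta R X + 1 := by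
    intro y X
    have h1 : (insert y X).card ≤ X.card + 1 := card_insert_le _ _
    have h2 := filt_mono X (insert y X) (subset_insert _ _)
    unfold delta
    push_cast
    omega
  have delta_sub : ∀ X Y : Finset α,
      delta R (X ∪ Y) + delta R (X ∩ Y) ≤ delta R X + delta R Y := by
    intro X Y
    have hcard : (X ∪ Y).card + (X ∩ Y).card = X.card + Y.card :=
      card_union_add_card_inter X Y
    have hu : R.filter (fun r => r ⊆ X) ∪ R.filter (fun r => r ⊆ Y)
        ⊆ R.filter (fun r => r ⊆ X ∪ Y) := by
      intro r hr
      simp only [mem_union, mem_filter] at hr ⊢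
      rcases hr with ⟨h, h2⟩ | ⟨h, h2⟩
      · exact ⟨h, h2.trans subset_union_left⟩
      · exact ⟨h, h2.trans subset_union_right⟩
    have hi : R.filter (fun r => r ⊆ X) ∩ R.filter (fun r => r ⊆ Y)
        = R.filter (fun r => r ⊆ X ∩ Y) := by
      ext r
      simp only [mem_inter, mem_filter, subset_inter_iff]
      tauto
    have hf : (R.filter (fun r => r ⊆ X)).card + (R.filter (fun r => r ⊆ Y)).card
        ≤ (R.filter (fun r => r ⊆ X ∪ Y)).card + (R.filter (fun r => r ⊆ X ∩ Y)).card := by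
      have := card_union_add_card_inter (R.filter (fun r => r ⊆ X)) (R.filter (fun r => r ⊆ Y))
      rw [hi] at this
      have := card_le_card hu
      omega
    unfold delta
    push_cast
    push_cast at hcard
    omega
  -- basic facts about d
  have hmem : ∀ X, X ⊆ A → ∃ Y, X ⊆ Y ∧ Y ⊆ A ∧ d X = delta R Y := fun X hX => (hd X hX).1
  have hlb : ∀ X, X ⊆ A → ∀ Y, X ⊆ Y → Y ⊆ A → d X ≤ delta R Y :=
    fun X hX Y h1 h2 => (hd X hX).2 ⟨Y, h1, h2, rfl⟩
  have dmono : ∀ X Y : Finset α, X ⊆ Y → Y ⊆ A → d X ≤ d Y := by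
    intro X Y hXY hYA
    obtain ⟨Z, hYZ, hZA, hdZ⟩ := hmem Y hYA
    rw [hdZ]
    exact hlb X (hXY.trans hYA) Z (hXY.trans hYZ) hZA
  have dle : ∀ X, X ⊆ A → d X ≤ (X.card : ℤ) :=
    fun X hX => (hlb X hX X Subset.rfl hX).trans (delta_le X)
  have dnonneg : ∀ X, X ⊆ A → 0 ≤ d X := by
    intro X hX
    obtain ⟨Z, _, hZA, hdZ⟩ := hmem X hX
    rw [hdZ]
    exact hpos Z hZA
  have dsub : ∀ X Y : Finset α, X ⊆ A → Y ⊆ A → d (X ∪ Y) + d (X ∩ Y) ≤ d X + d Y := by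
    intro X Y hXA hYA
    obtain ⟨Z1, h1, h1A, e1⟩ := hmem X hXA
    obtain ⟨Z2, h2, h2A, e2⟩ := hmem Y hYA
    have u : d (X ∪ Y) ≤ delta R (Z1 ∪ Z2) :=
      hlb _ (union_subset hXA hYA) _ (union_subset_union h1 h2) (union_subset h1A h2A)
    have i : d (X ∩ Y) ≤ delta R (Z1 ∩ Z2) :=
      hlb _ (inter_subset_left.trans hXA) _ (inter_subset_inter h1 h2)
        (inter_subset_left.trans h1A)
    have hs := delta_sub Z1 Z2
    rw [e1, e2]
    linarith
  have dstep : ∀ (y : α) (X : Finset α), y ∈ A → X ⊆ A → d (insert y X) ≤ d X + 1 := by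
    intro y X hy hX
    obtain ⟨Z, hZ1, hZA, e⟩ := hmem X hX
    have h1 : d (insert y X) ≤ delta R (insert y Z) :=
      hlb _ (insert_subset hy hX) _ (insert_subset_insert _ hZ1) (insert_subset hy hZA)
    have h2 := delta_insert y Z
    rw [e]
    linarith
  have dempty : d ∅ = 0 := by
    have h1 : d ∅ ≤ delta R ∅ := hlb ∅ (empty_subset A) ∅ Subset.rfl (empty_subset A)
    have h2 : delta R ∅ ≤ 0 := by
      unfold delta
      have : (0:ℤ) ≤ ((R.filter (fun r => r ⊆ (∅ : Finset α))).card : ℤ) := Int.ofNat_nonneg _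
      simp only [card_empty, Nat.cast_zero]
      linarith
    have h3 := dnonneg ∅ (empty_subset A)
    omega
  -- key closure-monotonicity lemma
  have clmono : ∀ (X Y : Finset α) (y : α), X ⊆ Y → Y ⊆ A → y ∈ A →
      d (insert y X) = d X → d (insert y Y) = d Y := by
    intro X Y y hXY hYA hy h
    have hXA : X ⊆ A := hXY.trans hYA
    have hsub := dsub Y (insert y X) hYA (insert_subset hy hXA)
    have hu : Y ∪ insert y X = insert y Y := by
      rw [union_insert, union_eq_left.mpr hXY]
    have hi : d X ≤ d (Y ∩ insert y X) :=
      dmono X _ (subset_inter hXY (subset_insert _ _)) (inter_subset_left.trans hYA)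
    have h1 : d Y ≤ d (insert y Y) := dmono Y _ (subset_insert _ _) (insert_subset hy hYA)
    rw [hu] at hsub
    omega
  have clsubA : ∀ X : Finset α, clFn A d X ⊆ A := fun X => filter_subset _ _
  -- X ⊆ cl X
  have h1cl : ∀ X, X ⊆ A → X ⊆ clFn A d X := by
    intro X hX y hy
    rw [clFn, mem_filter]
    exact ⟨hX hy, by rw [insert_eq_self.mpr hy]⟩
  -- d (cl X) = d X (via all intermediate sets)
  have key : ∀ X, X ⊆ A → ∀ S : Finset α, X ⊆ S → S ⊆ clFn A d X → d S = d X := by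
    intro X hXA S
    induction S using Finset.strongInduction with
    | _ S ih =>
      intro hXS hScl
      rcases eq_or_ssubset_of_subset hXS with h | h
      · rw [← h]
      · obtain ⟨y, hyS, hyX⟩ := exists_of_ssubset h
        have hy : y ∈ clFn A d X := hScl hyS
        rw [clFn, mem_filter] at hy
        have hX'S : X ⊆ S.erase y := subset_erase.mpr ⟨hXS, hyX⟩
        have hS'cl : S.erase y ⊆ clFn A d X := (erase_subset _ _).trans hScl
        have hS' := ih (S.erase y) (erase_ssubset hyS) hX'S hS'cl
        have hS'A : S.erase y ⊆ A := hS'cl.trans (clsubA X)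
        have h2 := clmono X (S.erase y) y hX'S hS'A hy.1 hy.2
        rw [insert_erase hyS] at h2
        rw [h2, hS']
  -- independence lemma
  have hindep : ∀ n : ℕ, ∀ B : Finset α, B ⊆ A → B.card = n →
      (∀ b ∈ B, d (B.erase b) ≠ d B) → (B.card : ℤ) ≤ d B := by
    intro n
    induction n with
    | zero =>
      intro B hBA hc _
      rw [card_eq_zero.mp hc]
      simp [dempty]
    | succ n ih =>
      intro B hBA hc hB
      obtain ⟨b, hb⟩ := card_pos.mp (by omega : 0 < B.card)
      have hB'A : B.erase b ⊆ A := (erase_subset _ _).trans hBA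
      have hB'c : (B.erase b).card = n := by rw [card_erase_of_mem hb]; omega
      have hB' : ∀ c ∈ B.erase b, d ((B.erase b).erase c) ≠ d (B.erase b) := by
        intro c hc' hEq
        have hcB : c ∈ B := mem_of_mem_erase hc'
        have h1 : d (insert c ((B.erase b).erase c)) = d ((B.erase b).erase c) := by
          rw [insert_erase hc', hEq]
        have hsub2 : (B.erase b).erase c ⊆ B.erase c := erase_subset_erase _ (erase_subset _ _)
        have h2 := clmono _ (B.erase c) c hsub2 ((erase_subset _ _).trans hBA) (hBA hcB) h1
        rw [insert_erase hcB] at h2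
        exact hB c hcB h2.symm
      have hih := ih (B.erase b) hB'A hB'c hB'
      have hstep : d B ≤ d (B.erase b) + 1 := by
        have h3 := dstep b (B.erase b) (hBA hb) hB'A
        rwa [insert_erase hb] at h3
      have hne := hB b hb
      have hle : d (B.erase b) ≤ d B := dmono _ _ (erase_subset _ _) hBA
      rw [hB'c] at hih
      rw [hc]
      push_cast
      omega
  -- basis extraction
  have hbasis : ∀ n : ℕ, ∀ B : Finset α, B ⊆ A → B.card = n →
      ∃ C, C ⊆ B ∧ (C.card : ℤ) = d C ∧ d C = d B := by
    intro n
    induction n with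
    | zero =>
      intro B hBA hc
      refine ⟨B, Subset.rfl, ?_, rfl⟩
      rw [card_eq_zero.mp hc]
      simp [dempty]
    | succ n ih =>
      intro B hBA hc
      by_cases h : ∀ b ∈ B, d (B.erase b) ≠ d B
      · refine ⟨B, Subset.rfl, ?_, rfl⟩
        have h1 := hindep (n+1) B hBA hc h
        have h2 := dle B hBA
        omega
      · push_neg at h
        obtain ⟨b, hb, heq⟩ := h
        obtain ⟨C, hC1, hC2, hC3⟩ := ih (B.erase b) ((erase_subset _ _).trans hBA)
          (by rw [card_erase_of_mem hb, hc]; omega)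
        exact ⟨C, hC1.trans (erase_subset _ _), hC2, by rw [hC3, heq]⟩
  refine ⟨h1cl, ?_, ?_, ?_, ?_⟩
  · -- monotone
    intro X Y hXY hYA y hy
    rw [clFn, mem_filter] at hy ⊢
    exact ⟨hy.1, clmono X Y y hXY hYA hy.1 hy.2⟩
  · -- idempotent
    intro X hXA
    apply Subset.antisymm
    · intro y hy
      rw [clFn, mem_filter] at hy ⊢
      have hdcl : d (clFn A d X) = d X := key X hXA _ (h1cl X hXA) Subset.rfl
      refine ⟨hy.1, ?_⟩
      have h1 : d (insert y X) ≤ d (insert y (clFn A d X)) :=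
        dmono _ _ (insert_subset_insert _ (h1cl X hXA)) (insert_subset hy.1 (clsubA X))
      have h2 : d X ≤ d (insert y X) := dmono _ _ (subset_insert _ _) (insert_subset hy.1 hXA)
      rw [hy.2, hdcl] at h1
      omega
    · exact h1cl _ (clsubA X)
  · -- exchange
    intro X hXA y hyA z hzA hycl hyncl
    rw [clFn, mem_filter] at hycl
    have hyX : d (insert y X) ≠ d X := by
      intro h
      exact hyncl (by rw [clFn, mem_filter]; exact ⟨hyA, h⟩)
    have hzXA : insert z X ⊆ A := insert_subset hzA hXA
    have hyXA : insert y X ⊆ A := insert_subset hyA hXA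
    have h2 : d X ≤ d (insert y X) := dmono _ _ (subset_insert _ _) hyXA
    have h3 := dstep y X hyA hXA
    have h4 : d X ≤ d (insert z X) := dmono _ _ (subset_insert _ _) hzXA
    have h5 := dstep z X hzA hXA
    rw [clFn, mem_filter]
    refine ⟨hzA, ?_⟩
    have hcomm : insert z (insert y X) = insert y (insert z X) := Finset.insert_comm z y X
    rw [hcomm, hycl.2]
    by_cases hz : d (insert z X) = d X
    · exfalso
      have h6 : d (insert y X) ≤ d (insert y (insert z X)) :=
        dmono _ _ (insert_subset_insert _ (subset_insert _ _)) (insert_subset hyA hzXA)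
      rw [hycl.2, hz] at h6
      omega
    · omega
  · -- basis
    intro X hXA
    obtain ⟨C, hCX, hCcard, hCd⟩ := hbasis X.card X hXA rfl
    have hCA : C ⊆ A := hCX.trans hXA
    refine ⟨C, hCX, ?_, ?_, by rw [hCcard, hCd]⟩
    · intro b hb hmem
      rw [clFn, mem_filter, insert_erase hb] at hmem
      have h1 : d (C.erase b) ≤ ((C.erase b).card : ℤ) := dle _ ((erase_subset _ _).trans hCA)
      rw [card_erase_of_mem hb] at h1
      have hbpos : 1 ≤ C.card := card_pos.mpr ⟨b, hb⟩
      have h2 := hmem.2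
      push_cast [hbpos] at h1
      omega
    · intro y hy
      rw [clFn, mem_filter]
      refine ⟨hXA hy, ?_⟩
      have h1 : d C ≤ d (insert y C) :=
        dmono _ _ (subset_insert _ _) (insert_subset (hXA hy) hCA)
      have h2 : d (insert y C) ≤ d X := dmono _ _ (insert_subset hy hCX) hXA
      omega
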